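/- Let (V, ≤) be a locally convex topological vector lattice whose topology is generated by a family of seminorms (ρ_i)_{i∈I} such that (a) for x, y ∈ V₊, x ≤ y iff ρ_i(x) ≤ ρ_i(y) for all i, and (b) for every function f : I → ℝ₊ there exists x ∈ V₊ with ρ_i(x) = f(i) for all i. Then V admits nontrivial minimal elements for unbounded, convex and semi-solid subsets of V₊. -/

import Mathlib

open Filter Topology

/-- A locally convex topological vector lattice whose topology is generated by a family of
seminorms `(ρ_i)` such that (a) for `x, y ∈ V₊`, `x ≤ y` iff `ρ_i(x) ≤ ρ_i(y)` for all `i`,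
and (b) every function `f : I → ℝ₊` is realized as `(ρ_i(x))_i` for some `x ∈ V₊`,
admits nontrivial minimal elements for unbounded, convex and semi-solid subsets of `V₊`. -/
theorem locallyConvex_admits_minimal_elements {V : Type*} [AddCommGroup V] [Lattice V]
    [CovariantClass V V (· + ·) (· ≤ ·)] [Module ℝ V] [PosSMulMono ℝ V]
    [TopologicalSpace V] [IsTopologicalAddGroup V] [ContinuousSMul ℝ V] [T2Space V]
    {I : Type*} [Nonempty I] (ρ : I → Seminorm ℝ V) (hsem : WithSeminorms ρ)
    (ha : ∀ x y : V, 0 ≤ x → 0 ≤ y → (x ≤ y ↔ ∀ i, ρ i x ≤ ρ i y))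
    (hb : ∀ f : I → ℝ, (∀ i, 0 ≤ f i) → ∃ x : V, 0 ≤ x ∧ ∀ i, ρ i x = f i) :
    ∀ B : Set V, (∀ x ∈ B, 0 ≤ x) → Convex ℝ B →
      (∀ x ∈ B, ∀ y : V, 0 ≤ y → y ≤ x → y ∈ B) →
      ¬ Bornology.IsVonNBounded ℝ B →
      ∃ x ∈ B, x ≠ 0 ∧ ∃ xs : ℕ → V, (∀ n, xs n ∈ B) ∧
        ∃ a : ℕ → ℝ, Antitone a ∧ (∀ n, 0 ≤ a n) ∧ Tendsto a atTop (𝓝 (0 : ℝ)) ∧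
          ∀ n, x ≤ a n • xs n := by
  classical
  intro B hBpos hBconv hBsolid hBunb
  -- find a seminorm unbounded on B
  rw [hsem.isVonNBounded_iff_seminorm_bounded] at hBunb
  push_neg at hBunb
  obtain ⟨i₀, hi₀⟩ := hBunb
  -- choose xs n ∈ B with ρ i₀ (xs n) ≥ 2^(n+1)
  have hxs : ∀ n : ℕ, ∃ z ∈ B, (2:ℝ)^(n+1) ≤ ρ i₀ z := by
    intro n
    obtain ⟨z, hz, hz2⟩ := hi₀ ((2:ℝ)^(n+1)) (by positivity)
    exact ⟨z, hz, hz2⟩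
  choose xs hxsB hxsρ using hxs
  -- choose x with ρ i x = indicator
  obtain ⟨x, hx0, hxρ⟩ := hb (fun i => if i = i₀ then 1 else 0)
    (fun i => by split <;> norm_num)
  set a : ℕ → ℝ := fun n => ((1:ℝ)/2)^(n+1) with ha_def
  have han : ∀ n, 0 ≤ a n := fun n => by positivity
  have haxs0 : ∀ n, (0:V) ≤ a n • xs n := fun n =>
    smul_nonneg (han n) (hBpos _ (hxsB n))
  have key : ∀ n, x ≤ a n • xs n := by
    intro n
    rw [ha x _ hx0 (haxs0 n)]
    intro i
    have : ρ i (a n • xs n) = a n * ρ i (xs n) := by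
      rw [map_smul_eq_mul, Real.norm_eq_abs, abs_of_nonneg (han n)]
    rw [this, hxρ i]
    by_cases hi : i = i₀
    · subst hi
      simp only [if_pos rfl]
      have h2 : (2:ℝ)^(n+1) ≤ ρ i (xs n) := hxsρ n
      have hpos : (0:ℝ) < ((1:ℝ)/2)^(n+1) := by positivity
      calc (1:ℝ) = ((1:ℝ)/2)^(n+1) * (2:ℝ)^(n+1) := by
            rw [← mul_pow]; norm_num
        _ ≤ a n * ρ i (xs n) := by
            exact mul_le_mul_of_nonneg_left h2 (le_of_lt hpos)
    · simp only [if_neg hi]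
      exact mul_nonneg (han n) (apply_nonneg _ _)
  -- B contains 0
  have h0B : (0:V) ∈ B := hBsolid _ (hxsB 0) 0 le_rfl (hBpos _ (hxsB 0))
  -- a n • xs n ∈ B by convexity
  have haB : ∀ n, a n • xs n ∈ B := by
    intro n
    have h1 : a n ≤ 1 := by
      rw [ha_def]
      calc ((1:ℝ)/2)^(n+1) ≤ 1^(n+1) := pow_le_pow_left₀ (by norm_num) (by norm_num) _
        _ = 1 := one_pow _
    have := hBconv (hxsB n) h0B (han n) (by linarith : (0:ℝ) ≤ 1 - a n) (by ring)
    simpa using this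
  have hxB : x ∈ B := hBsolid _ (haB 0) x hx0 (key 0)
  have hxne : x ≠ 0 := by
    intro h
    have := hxρ i₀
    rw [h, map_zero, if_pos rfl] at this
    norm_num at this
  refine ⟨x, hxB, hxne, xs, hxsB, a, ?_, han, ?_, key⟩
  · exact fun m n hmn => pow_le_pow_of_le_one (by norm_num) (by norm_num) (by omega)
  · have : Tendsto (fun n : ℕ => ((1:ℝ)/2)^n) atTop (𝓝 0) :=
      tendsto_pow_atTop_nhds_zero_of_lt_one (by norm_num) (by norm_num)
    exact this.comp (tendsto_add_atTop_nat 1)
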